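/- Let k, ℓ, r be integers with 1 ≤ r ≤ ℓ, 3 ≤ ℓ, and ℓ ≤ k/3. Let q = ⌈k/ℓ⌉, let π be a uniformly random permutation of {1,…,k}, and let R = min{π(1),…,π(q)}. Then Pr(R > r) > e^{−4r/ℓ}. -/

import Mathlib

open scoped Classical

/-- For a permutation `π` of `{1,…,k}` (modelled as `Equiv.Perm (Fin k)` with values
`(π j).val + 1 ∈ {1,…,k}`), `minOfFirst k q π` is `R = min {π(1),…,π(q)}`. -/
noncomputable def minOfFirst (k q : ℕ) (π : Equiv.Perm (Fin k)) : ℕ :=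
  sInf {v : ℕ | ∃ j : Fin k, (j : ℕ) < q ∧ v = (π j : ℕ) + 1}

/-- The number of permutations extending a given embedding `Fin q ↪ Fin k` on the
first `q` coordinates is `(k - q)!`. -/
lemma fiber_card_eq {k q : ℕ} (hq : q ≤ k) (f : Fin q ↪ Fin k) :
    Fintype.card {π : Equiv.Perm (Fin k) // ∀ j : Fin q, π (Fin.castLE hq j) = f j}
      = Nat.factorial (k - q) := by
  have hiinj : Function.Injective (Fin.castLE hq) := Fin.castLE_injective hq
  have hfinj : Function.Injective (f : Fin q → Fin k) := f.injective
  let e₀ : (Set.range (Fin.castLE hq)) ≃ (Set.range (f : Fin q → Fin k)) :=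
    (Equiv.ofInjective _ hiinj).symm.trans (Equiv.ofInjective _ hfinj)
  have hcards : Fintype.card (Set.range (Fin.castLE hq)) = q := by
    rw [Fintype.card_congr (Equiv.ofInjective _ hiinj).symm, Fintype.card_fin]
  have hcardt : Fintype.card (Set.range (f : Fin q → Fin k)) = q := by
    rw [Fintype.card_congr (Equiv.ofInjective _ hfinj).symm, Fintype.card_fin]
  have he₀app : ∀ (x : Set.range (Fin.castLE hq)) (j : Fin q),
      (x : Fin k) = Fin.castLE hq j → ((e₀ x : Fin k) = f j) := by
    rintro ⟨x, hx⟩ j h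
    simp only at h
    subst h
    show ((Equiv.ofInjective _ hfinj)
      ((Equiv.ofInjective _ hiinj).symm ⟨Fin.castLE hq j, hx⟩) : Fin k) = f j
    have h1 : (⟨Fin.castLE hq j, hx⟩ : Set.range (Fin.castLE hq))
        = Equiv.ofInjective _ hiinj j := by
      apply Subtype.ext; rfl
    rw [h1, Equiv.symm_apply_apply]
    rfl
  have hequiv : {π : Equiv.Perm (Fin k) // ∀ j : Fin q, π (Fin.castLE hq j) = f j}
      ≃ {e : Fin k ≃ Fin k // ∀ x : Set.range (Fin.castLE hq), e x = e₀ x} := by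
    apply Equiv.subtypeEquivRight
    intro π
    constructor
    · rintro h ⟨x, hx⟩
      obtain ⟨j, rfl⟩ := hx
      rw [he₀app _ j rfl]
      exact h j
    · intro h j
      have := h ⟨Fin.castLE hq j, ⟨j, rfl⟩⟩
      rw [he₀app _ j rfl] at this
      exact this
  have hcompl : Fintype.card ((Set.range (Fin.castLE hq))ᶜ : Set (Fin k))
      = Fintype.card ((Set.range (f : Fin q → Fin k))ᶜ : Set (Fin k)) := by
    rw [Fintype.card_compl_set, Fintype.card_compl_set, hcards, hcardt]
  calc Fintype.card {π : Equiv.Perm (Fin k) // ∀ j : Fin q, π (Fin.castLE hq j) = f j}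
      = Fintype.card (((Set.range (Fin.castLE hq))ᶜ : Set (Fin k))
          ≃ ((Set.range (f : Fin q → Fin k))ᶜ : Set (Fin k))) :=
        Fintype.card_congr (hequiv.trans (Equiv.Set.compl e₀))
    _ = Nat.factorial (Fintype.card ((Set.range (Fin.castLE hq))ᶜ : Set (Fin k))) :=
        Fintype.card_equiv (Fintype.equivOfCardEq hcompl)
    _ = Nat.factorial (k - q) := by
        rw [Fintype.card_compl_set, hcards, Fintype.card_fin]

/-- Count of permutations of `Fin k` whose first `q` values all have `val ≥ r`. -/
lemma count_perm_ge (k q r : ℕ) (hq : q ≤ k) (hrk : r < k) :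
    ((Finset.univ : Finset (Equiv.Perm (Fin k))).filter
        (fun π => ∀ j : Fin k, (j : ℕ) < q → r ≤ ((π j : Fin k) : ℕ))).card
      = (k - r).descFactorial q * Nat.factorial (k - q) := by
  classical
  set P : Equiv.Perm (Fin k) → Prop :=
    fun π => ∀ j : Fin k, (j : ℕ) < q → r ≤ ((π j : Fin k) : ℕ) with hP
  set Φ : Equiv.Perm (Fin k) → (Fin q ↪ Fin k) :=
    fun π => (Fin.castLEEmb hq).trans π.toEmbedding with hΦ
  have hΦapp : ∀ (π : Equiv.Perm (Fin k)) (j : Fin q), Φ π j = π (Fin.castLE hq j) := by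
    intro π j; rw [hΦ]; rfl
  set B : Finset (Fin q ↪ Fin k) :=
    Finset.univ.filter (fun f => ∀ j : Fin q, r ≤ ((f j : Fin k) : ℕ)) with hB
  have hmap : ∀ π ∈ Finset.univ.filter P, Φ π ∈ B := by
    intro π hπ
    rw [Finset.mem_filter] at hπ
    rw [hB, Finset.mem_filter]
    refine ⟨Finset.mem_univ _, fun j => ?_⟩
    rw [hΦapp]
    exact hπ.2 (Fin.castLE hq j) (by simpa using j.isLt)
  rw [Finset.card_eq_sum_card_fiberwise hmap]
  have hfib : ∀ f ∈ B, ((Finset.univ.filter P).filter (fun π => Φ π = f)).card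
      = Nat.factorial (k - q) := by
    intro f hf
    rw [hB, Finset.mem_filter] at hf
    have hfe : (Finset.univ.filter P).filter (fun π => Φ π = f)
        = Finset.univ.filter (fun π => Φ π = f) := by
      ext π
      simp only [Finset.mem_filter, Finset.mem_univ, true_and]
      constructor
      · rintro ⟨-, h⟩; exact h
      · intro h
        refine ⟨?_, h⟩
        intro j hj
        have h1 : Φ π ⟨(j : ℕ), hj⟩ = f ⟨(j : ℕ), hj⟩ := by rw [h]
        rw [hΦapp] at h1
        have h2 : Fin.castLE hq ⟨(j : ℕ), hj⟩ = j := by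
          apply Fin.ext; rfl
        rw [h2] at h1
        rw [h1]
        exact hf.2 _
    rw [hfe]
    have := fiber_card_eq hq f
    rw [Fintype.card_subtype] at this
    rw [← this]
    apply Finset.card_bij (fun π _ => π)
    · intro π hπ
      rw [Finset.mem_filter] at hπ ⊢
      refine ⟨Finset.mem_univ _, fun j => ?_⟩
      have := hπ.2
      rw [DFunLike.ext_iff] at this
      have := this j
      rw [hΦapp] at this
      exact this
    · intro a b _ _ h; exact h
    · intro π hπ
      refine ⟨π, ?_, rfl⟩
      rw [Finset.mem_filter] at hπ ⊢
      refine ⟨Finset.mem_univ _, ?_⟩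
      apply DFunLike.ext
      intro j
      rw [hΦapp]
      exact hπ.2 j
  rw [Finset.sum_congr rfl hfib, Finset.sum_const, smul_eq_mul]
  congr 1
  -- card B = (k - r).descFactorial q
  have hcardB : B.card = Fintype.card {f : Fin q ↪ Fin k // ∀ j : Fin q, r ≤ ((f j : Fin k) : ℕ)} := by
    rw [Fintype.card_subtype]
  rw [hcardB]
  have hEq : {f : Fin q ↪ Fin k // ∀ j : Fin q, r ≤ ((f j : Fin k) : ℕ)}
      ≃ (Fin q ↪ {x : Fin k // r ≤ (x : ℕ)}) := by
    refine ⟨fun F => ⟨fun j => ⟨F.1 j, F.2 j⟩, ?_⟩, fun g => ⟨g.trans (Function.Embedding.subtype _), fun j => (g j).2⟩, ?_, ?_⟩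
    · intro a b h
      exact F.1.injective (congrArg Subtype.val h)
    · intro F
      apply Subtype.ext
      apply DFunLike.ext
      intro j; rfl
    · intro g
      apply DFunLike.ext
      intro j
      apply Subtype.ext
      rfl
  rw [Fintype.card_congr hEq, Fintype.card_embedding_eq, Fintype.card_fin]
  congr 1
  rw [Fintype.card_subtype]
  have : Finset.univ.filter (fun x : Fin k => r ≤ (x : ℕ)) = Finset.Ici (⟨r, hrk⟩ : Fin k) := by
    ext x
    simp [Finset.mem_Ici, Fin.le_def]
  rw [this, Fin.card_Ici]

/-- For integers `1 ≤ r ≤ ℓ`, `3 ≤ ℓ`, `ℓ ≤ k/3`, `q = ⌈k/ℓ⌉`, a uniformly random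
permutation `π` of `{1,…,k}` and `R = min{π(1),…,π(q)}`,
we have `Pr(R > r) > e^(−4r/ℓ)`. -/
theorem prob_min_gt_gt_exp (k ℓ r : ℕ) (hr : 1 ≤ r) (hrl : r ≤ ℓ) (hl : 3 ≤ ℓ)
    (hlk : (ℓ : ℝ) ≤ (k : ℝ) / 3) :
    Real.exp (-(4 * r : ℝ) / (ℓ : ℝ)) <
      (((Finset.univ : Finset (Equiv.Perm (Fin k))).filter (fun π =>
          r < minOfFirst k ⌈(k : ℝ) / (ℓ : ℝ)⌉₊ π)).card : ℝ) / (Nat.factorial k : ℝ) := by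
  classical
  set q : ℕ := ⌈(k : ℝ) / (ℓ : ℝ)⌉₊ with hqdef
  -- basic numeric facts
  have hl0 : (0 : ℝ) < (ℓ : ℝ) := by positivity
  have hk3 : 3 * (ℓ : ℝ) ≤ (k : ℝ) := by linarith
  have hl3 : (3 : ℝ) ≤ (ℓ : ℝ) := by exact_mod_cast hl
  have hk9 : (9 : ℝ) ≤ (k : ℝ) := by linarith
  have hk0 : (0 : ℝ) < (k : ℝ) := by linarith
  have hkpos : 0 < k := by exact_mod_cast hk0
  have hr1 : (1 : ℝ) ≤ (r : ℝ) := by exact_mod_cast hr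
  have hrlR : (r : ℝ) ≤ (ℓ : ℝ) := by exact_mod_cast hrl
  have hrk3 : (3 : ℝ) * (r : ℝ) ≤ (k : ℝ) := by linarith
  have hqge : (k : ℝ) / (ℓ : ℝ) ≤ (q : ℝ) := Nat.le_ceil _
  have hqlt : (q : ℝ) < (k : ℝ) / (ℓ : ℝ) + 1 :=
    Nat.ceil_lt_add_one (by positivity)
  have hdiv3 : (k : ℝ) / (ℓ : ℝ) ≤ (k : ℝ) / 3 :=
    div_le_div_of_nonneg_left (le_of_lt hk0) (by norm_num) hl3
  have hdivge3 : (3 : ℝ) ≤ (k : ℝ) / (ℓ : ℝ) := by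
    rw [le_div_iff₀ hl0]; linarith
  have hq3 : (3 : ℝ) ≤ (q : ℝ) := le_trans hdivge3 hqge
  have hq1 : 1 ≤ q := by exact_mod_cast le_trans (by norm_num : (1:ℝ) ≤ 3) hq3
  have hqltk : (q : ℝ) < (k : ℝ) := by
    have : (k : ℝ) / 3 + 1 ≤ (k : ℝ) := by linarith
    linarith
  have hqk : q ≤ k := le_of_lt (by exact_mod_cast hqltk)
  have hrk : r < k := by
    have : (r : ℝ) < (k : ℝ) := by linarith
    exact_mod_cast this
  -- rewrite the condition as "all first q values ≥ r"
  have hmin : ∀ π : Equiv.Perm (Fin k),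
      (r < minOfFirst k q π ↔ ∀ j : Fin k, (j : ℕ) < q → r ≤ ((π j : Fin k) : ℕ)) := by
    intro π
    have hne : {v : ℕ | ∃ j : Fin k, (j : ℕ) < q ∧ v = (π j : ℕ) + 1}.Nonempty := by
      refine ⟨(π ⟨0, hkpos⟩ : ℕ) + 1, ⟨⟨0, hkpos⟩, ?_, rfl⟩⟩
      exact hq1
    constructor
    · intro h j hj
      have hle := Nat.sInf_le (show ((π j : ℕ) + 1) ∈
        {v : ℕ | ∃ j : Fin k, (j : ℕ) < q ∧ v = (π j : ℕ) + 1} from ⟨j, hj, rfl⟩)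
      have : r < (π j : ℕ) + 1 := lt_of_lt_of_le h hle
      omega
    · intro h
      obtain ⟨j, hj, hv⟩ := Nat.sInf_mem hne
      have := h j hj
      unfold minOfFirst
      omega
  have hfilter : (Finset.univ : Finset (Equiv.Perm (Fin k))).filter
        (fun π => r < minOfFirst k q π)
      = (Finset.univ : Finset (Equiv.Perm (Fin k))).filter
        (fun π => ∀ j : Fin k, (j : ℕ) < q → r ≤ ((π j : Fin k) : ℕ)) := by
    apply Finset.filter_congr
    intro π _
    exact hmin π
  rw [hfilter, count_perm_ge k q r hqk hrk]
  -- now pure analysis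
  set x : ℝ := 3 * (r : ℝ) / (2 * (k : ℝ)) with hxdef
  have hxk : 2 * (k : ℝ) * x = 3 * (r : ℝ) := by
    rw [hxdef]; field_simp
  have hx0 : 0 < x := by positivity
  have hx12 : 2 * x ≤ 1 := by
    have h2 : 2 * x * (k : ℝ) ≤ 1 * (k : ℝ) := by linarith [hxk, hrk3]
    exact le_of_mul_le_mul_right h2 hk0
  have h1x0 : 0 ≤ 1 - x := by linarith
  -- key1 : exp(-(2x)) < 1 - x
  have key1 : Real.exp (-(2 * x)) < 1 - x := by
    have h2 : 2 * x + 1 < Real.exp (2 * x) := Real.add_one_lt_exp (by positivity)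
    have hpos : (0 : ℝ) < 2 * x + 1 := by linarith
    have hinv : (Real.exp (2 * x))⁻¹ < (2 * x + 1)⁻¹ := by
      apply inv_strictAnti₀ hpos h2
    have hinv2 : (2 * x + 1)⁻¹ ≤ 1 - x := by
      rw [inv_eq_one_div, div_le_iff₀ hpos]
      have h9 := mul_nonneg (le_of_lt hx0) (by linarith : (0:ℝ) ≤ 1 - 2 * x)
      nlinarith [h9]
    rw [Real.exp_neg]
    linarith
  -- per-factor bound
  have hstep : ∀ m : ℕ, m < q → (1 - x) * ((k - m : ℕ) : ℝ) ≤ ((k - r - m : ℕ) : ℝ) := by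
    intro m hm
    have hmq : (m : ℝ) ≤ (q : ℝ) - 1 := by
      have : (m : ℝ) + 1 ≤ (q : ℝ) := by exact_mod_cast hm
      linarith
    have hm3 : 3 * (m : ℝ) ≤ (k : ℝ) := by
      have h5 : ((q : ℝ) - 1) * (ℓ : ℝ) < (k : ℝ) := by
        rw [← lt_div_iff₀ hl0]; linarith
      have h6 := mul_le_mul_of_nonneg_left hl3 (by linarith : (0:ℝ) ≤ (q : ℝ) - 1)
      linarith
    have hmk : (m : ℝ) ≤ (k : ℝ) := by linarith
    have hrm : (r : ℝ) + (m : ℝ) ≤ (k : ℝ) := by linarith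
    have hmk' : m ≤ k := by exact_mod_cast hmk
    have hrm' : r + m ≤ k := by exact_mod_cast hrm
    have hcast1 : ((k - m : ℕ) : ℝ) = (k : ℝ) - (m : ℝ) := by
      rw [Nat.cast_sub hmk']
    have hcast2 : ((k - r - m : ℕ) : ℝ) = (k : ℝ) - (r : ℝ) - (m : ℝ) := by
      rw [Nat.cast_sub (by omega : m ≤ k - r), Nat.cast_sub (by omega : r ≤ k)]
    rw [hcast1, hcast2]
    have hprod : x * (3 * (m : ℝ)) ≤ x * (k : ℝ) :=
      mul_le_mul_of_nonneg_left hm3 (le_of_lt hx0)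
    have hexp : (1 - x) * ((k : ℝ) - (m : ℝ))
        = (k : ℝ) - (m : ℝ) - x * (k : ℝ) + x * (m : ℝ) := by ring
    linarith [hxk, hprod, hexp]
  -- product bound by induction
  have key3 : ∀ m : ℕ, m ≤ q →
      (1 - x) ^ m * ((k.descFactorial m : ℕ) : ℝ) ≤ (((k - r).descFactorial m : ℕ) : ℝ) := by
    intro m
    induction m with
    | zero => intro _; simp
    | succ n ih =>
      intro hn
      have hn' : n ≤ q := le_of_lt (Nat.lt_of_succ_le hn)
      have hnq : n < q := Nat.lt_of_succ_le hn
      have ihn := ih hn'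
      rw [Nat.descFactorial_succ, Nat.descFactorial_succ]
      push_cast
      have h1 := hstep n hnq
      have hnn1 : (0 : ℝ) ≤ (1 - x) ^ n * ((k.descFactorial n : ℕ) : ℝ) := by positivity
      have hnn2 : (0 : ℝ) ≤ ((k - r - n : ℕ) : ℝ) := by positivity
      calc (1 - x) ^ (n + 1) * (((k - n : ℕ) : ℝ) * ((k.descFactorial n : ℕ) : ℝ))
          = ((1 - x) * ((k - n : ℕ) : ℝ)) * ((1 - x) ^ n * ((k.descFactorial n : ℕ) : ℝ)) := by
            ring
        _ ≤ ((k - r - n : ℕ) : ℝ) * (((k - r).descFactorial n : ℕ) : ℝ) := by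
            apply mul_le_mul h1 ihn hnn1 hnn2
  -- positivity of denominators
  have hDk0 : 0 < k.descFactorial q := by
    rcases Nat.eq_zero_or_pos (k.descFactorial q) with h | h
    · rw [Nat.descFactorial_eq_zero_iff_lt] at h; omega
    · exact h
  have hDkR : (0 : ℝ) < ((k.descFactorial q : ℕ) : ℝ) := by exact_mod_cast hDk0
  have hfq0 : (0 : ℝ) < ((Nat.factorial (k - q) : ℕ) : ℝ) := by
    exact_mod_cast Nat.factorial_pos (k - q)
  have hkfac : (Nat.factorial k : ℝ)
      = ((Nat.factorial (k - q) : ℕ) : ℝ) * ((k.descFactorial q : ℕ) : ℝ) := by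
    rw [← Nat.cast_mul, Nat.factorial_mul_descFactorial hqk]
  -- exponential chain
  have hq4 : 3 * (ℓ : ℝ) * (q : ℝ) ≤ 4 * (k : ℝ) := by
    have h5 : ((q : ℝ) - 1) * (ℓ : ℝ) < (k : ℝ) := by
      rw [← lt_div_iff₀ hl0]; linarith
    linarith
  have harg : -(4 * (r : ℝ)) / (ℓ : ℝ) ≤ -(2 * x) * (q : ℝ) := by
    rw [div_le_iff₀ hl0]
    have hq0 : (0 : ℝ) ≤ (q : ℝ) := by positivity
    have hprod : (2 * (k : ℝ) * x) * ((q : ℝ) * (ℓ : ℝ)) = (3 * (r : ℝ)) * ((q : ℝ) * (ℓ : ℝ)) := by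
      rw [hxk]
    have hprod2 : (r : ℝ) * (3 * (ℓ : ℝ) * (q : ℝ)) ≤ (r : ℝ) * (4 * (k : ℝ)) :=
      mul_le_mul_of_nonneg_left hq4 (by positivity)
    have h9 : (2 * x * ((q : ℝ) * (ℓ : ℝ))) * (k : ℝ) ≤ (4 * (r : ℝ)) * (k : ℝ) := by
      linarith [hprod, hprod2]
    have h10 : 2 * x * ((q : ℝ) * (ℓ : ℝ)) ≤ 4 * (r : ℝ) :=
      le_of_mul_le_mul_right h9 hk0
    linarith [h10]
  have hexp1 : Real.exp (-(4 * (r : ℝ)) / (ℓ : ℝ)) ≤ Real.exp (-(2 * x) * (q : ℝ)) :=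
    Real.exp_le_exp.mpr harg
  have hexp2 : Real.exp (-(2 * x) * (q : ℝ)) = (Real.exp (-(2 * x))) ^ q := by
    rw [mul_comm, Real.exp_nat_mul]
  have hexp3 : (Real.exp (-(2 * x))) ^ q < (1 - x) ^ q := by
    apply pow_lt_pow_left₀ key1 (le_of_lt (Real.exp_pos _))
    omega
  have hratio : (1 - x) ^ q
      ≤ (((k - r).descFactorial q : ℕ) : ℝ) / ((k.descFactorial q : ℕ) : ℝ) := by
    rw [le_div_iff₀ hDkR]
    exact key3 q le_rfl
  have hfinal : (((k - r).descFactorial q : ℕ) : ℝ) / ((k.descFactorial q : ℕ) : ℝ)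
      = (((k - r).descFactorial q * Nat.factorial (k - q) : ℕ) : ℝ) / (Nat.factorial k : ℝ) := by
    rw [hkfac]
    push_cast
    rw [div_eq_div_iff (ne_of_gt hDkR) (by positivity)]
    ring
  calc Real.exp (-(4 * (r : ℝ)) / (ℓ : ℝ))
      ≤ Real.exp (-(2 * x) * (q : ℝ)) := hexp1
    _ = (Real.exp (-(2 * x))) ^ q := hexp2
    _ < (1 - x) ^ q := hexp3
    _ ≤ (((k - r).descFactorial q : ℕ) : ℝ) / ((k.descFactorial q : ℕ) : ℝ) := hratio
    _ = _ := by rw [hfinal]
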